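/- For every positive integer N there exists an MSTD set M ⊆ ℤ such that every symmetric subset S of M satisfies |S| ≤ |M| − N; that is, the difference between the size of an MSTD set and the maximal size of a symmetric subset of it can be made arbitrarily large. -/
import Mathlib

open Finset Pointwise

private lemma scaled_card (X Y : Finset ℤ) (c : ℤ) (hX : ∀ x ∈ X, c ≤ x ∧ x < c + 30) :
    (X + Y.image (fun y => 30 * y)).card = X.card * Y.card := by
  have heq : X + Y.image (fun y => 30 * y) = (X ×ˢ Y).image (fun p => p.1 + 30 * p.2) := by
    ext z
    simp only [Finset.mem_add, Finset.mem_image, Finset.mem_product]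
    constructor
    · rintro ⟨a, ha, b, ⟨y, hy, rfl⟩, rfl⟩
      exact ⟨(a, y), ⟨ha, hy⟩, rfl⟩
    · rintro ⟨⟨a, y⟩, ⟨ha, hy⟩, rfl⟩
      exact ⟨a, ha, 30 * y, ⟨y, hy, rfl⟩, rfl⟩
  rw [heq, Finset.card_image_of_injOn, Finset.card_product]
  rintro ⟨a, y⟩ hp ⟨a', y'⟩ hq h
  simp only [Finset.mem_coe, Finset.mem_product] at hp hq
  have h1 := hX a hp.1
  have h2 := hX a' hq.1
  simp only at h
  have : a = a' ∧ y = y' := by omega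
  simp [Prod.ext_iff, this.1, this.2]

private lemma scaled_add (Y Z : Finset ℤ) :
    Y.image (fun y => 30 * y) + Z.image (fun y => 30 * y) = (Y + Z).image (fun y => 30 * y) := by
  ext z
  simp only [Finset.mem_add, Finset.mem_image]
  constructor
  · rintro ⟨a, ⟨y, hy, rfl⟩, b, ⟨w, hw, rfl⟩, rfl⟩
    exact ⟨y + w, ⟨y, hy, w, hw, rfl⟩, by ring⟩
  · rintro ⟨u, ⟨y, hy, w, hw, rfl⟩, rfl⟩
    exact ⟨30 * y, ⟨y, hy, rfl⟩, 30 * w, ⟨w, hw, rfl⟩, by ring⟩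

private lemma scaled_sub (Y Z : Finset ℤ) :
    Y.image (fun y => 30 * y) - Z.image (fun y => 30 * y) = (Y - Z).image (fun y => 30 * y) := by
  ext z
  simp only [Finset.mem_sub, Finset.mem_image]
  constructor
  · rintro ⟨a, ⟨y, hy, rfl⟩, b, ⟨w, hw, rfl⟩, rfl⟩
    exact ⟨y - w, ⟨y, hy, w, hw, rfl⟩, by ring⟩
  · rintro ⟨u, ⟨y, hy, w, hw, rfl⟩, rfl⟩
    exact ⟨30 * y, ⟨y, hy, rfl⟩, 30 * w, ⟨w, hw, rfl⟩, by ring⟩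

private lemma add_sub_rearrange (A B : Finset ℤ) : (A + B) - (A + B) = (A - A) + (B - B) := by
  ext z
  simp only [Finset.mem_sub, Finset.mem_add]
  constructor
  · rintro ⟨u, ⟨a, ha, b, hb, rfl⟩, v, ⟨a', ha', b', hb', rfl⟩, rfl⟩
    exact ⟨a - a', ⟨a, ha, a', ha', rfl⟩, b - b', ⟨b, hb, b', hb', rfl⟩, by ring⟩
  · rintro ⟨u, ⟨a, ha, a', ha', rfl⟩, v, ⟨b, hb, b', hb', rfl⟩, rfl⟩
    exact ⟨a + b, ⟨a, ha, b, hb, rfl⟩, a' + b', ⟨a', ha', b', hb', rfl⟩, by ring⟩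

private lemma Icc_add_Icc' (a b c d : ℤ) (hab : a ≤ b) (hcd : c ≤ d) :
    Finset.Icc a b + Finset.Icc c d = Finset.Icc (a + c) (b + d) := by
  ext z
  simp only [Finset.mem_add, Finset.mem_Icc]
  constructor
  · rintro ⟨u, hu, v, hv, rfl⟩; omega
  · intro hz
    exact ⟨max a (z - d), by omega, z - max a (z - d), by omega, by omega⟩

private lemma Icc_sub_Icc' (a b c d : ℤ) (hab : a ≤ b) (hcd : c ≤ d) :
    Finset.Icc a b - Finset.Icc c d = Finset.Icc (a - d) (b - c) := by
  ext z
  simp only [Finset.mem_sub, Finset.mem_Icc]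
  constructor
  · rintro ⟨u, hu, v, hv, rfl⟩; omega
  · intro hz
    exact ⟨max a (z + c), by omega, max a (z + c) - z, by omega, by omega⟩
private def A8 : Finset ℤ := {0, 2, 3, 4, 7, 11, 12, 14}

private lemma A8_card : A8.card = 8 := by decide
private lemma A8_bd : ∀ x ∈ A8, (0:ℤ) ≤ x ∧ x < 0 + 30 := by decide
private lemma A8_elem_bd : ∀ a ∈ A8, (0:ℤ) ≤ a ∧ a ≤ 14 := by decide
private lemma A8_sum_card : (A8 + A8).card = 26 := by decide
private lemma A8_diff_card : (A8 - A8).card = 25 := by decide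
private lemma A8_sum_bd : ∀ x ∈ A8 + A8, (0:ℤ) ≤ x ∧ x < 0 + 30 := by decide
private lemma A8_diff_bd : ∀ x ∈ A8 - A8, (-15:ℤ) ≤ x ∧ x < -15 + 30 := by decide
private lemma A8_sym_bd : ∀ d ∈ Finset.Icc (0:ℤ) 29,
    (A8 ∩ A8.image (fun a => d - a)).card ≤ 7 := by decide

set_option maxHeartbeats 1000000 in
/-- The gap between the size of an MSTD set and the maximal size of a
symmetric subset of it can be made arbitrarily large: for every `N > 0`
there is an MSTD set `M ⊆ ℤ` all of whose symmetric subsets `S` satisfy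
`|S| ≤ |M| − N`. -/
theorem symmetric_subset_gap_unbounded (N : ℕ) (hN : 0 < N) :
    ∃ M : Finset ℤ, (M - M).card < (M + M).card ∧
      ∀ S : Finset ℤ, S ⊆ M →
        (∃ x : ℤ, S = S.image (fun s => x - s)) → S.card + N ≤ M.card := by
  set Y : Finset ℤ := Finset.Icc 0 ((N : ℤ) - 1) with hYdef
  set B : Finset ℤ := Y.image (fun y => 30 * y) with hBdef
  clear_value Y B
  have hY1 : (0 : ℤ) ≤ (N : ℤ) - 1 := by omega
  have cY : Y.card = N := by rw [hYdef, Int.card_Icc]; omega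
  refine ⟨A8 + B, ?_, ?_⟩
  · -- MSTD
    have hsum : (A8 + B) + (A8 + B) = (A8 + A8) + ((Y + Y).image (fun y => 30 * y)) := by
      rw [add_add_add_comm, hBdef, scaled_add]
    have hdiff : (A8 + B) - (A8 + B) = (A8 - A8) + ((Y - Y).image (fun y => 30 * y)) := by
      rw [add_sub_rearrange, hBdef, scaled_sub]
    have c1 : (Y + Y).card = 2 * N - 1 := by
      rw [hYdef, Icc_add_Icc' _ _ _ _ hY1 hY1, Int.card_Icc]; omega
    have c2 : (Y - Y).card = 2 * N - 1 := by
      rw [hYdef, Icc_sub_Icc' _ _ _ _ hY1 hY1, Int.card_Icc]; omega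
    have csum : ((A8 + B) + (A8 + B)).card = 26 * (2 * N - 1) := by
      rw [hsum, scaled_card (A8 + A8) (Y + Y) 0 A8_sum_bd, c1, A8_sum_card]
    have cdiff : ((A8 + B) - (A8 + B)).card = 25 * (2 * N - 1) := by
      rw [hdiff, scaled_card (A8 - A8) (Y - Y) (-15) A8_diff_bd, c2, A8_diff_card]
    rw [csum, cdiff]
    have h1 : 1 ≤ 2 * N - 1 := by omega
    nlinarith
  · -- symmetric subsets are small
    intro S hSM ⟨x, hSx⟩
    have hrefl : ∀ s ∈ S, x - s ∈ S := by
      intro s hs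
      rw [hSx] at hs
      simp only [Finset.mem_image] at hs
      obtain ⟨s', hs', rfl⟩ := hs
      simpa using hs'
    have key : S ⊆ (A8 ∩ A8.image (fun a => x % 30 - a)) + B := by
      intro s hs
      simp only [Finset.mem_add, Finset.mem_inter, Finset.mem_image]
      have hsM := hSM hs
      rw [Finset.mem_add] at hsM
      obtain ⟨a, ha, b, hb, hab⟩ := hsM
      have hsM' := hSM (hrefl s hs)
      rw [Finset.mem_add] at hsM'
      obtain ⟨a', ha', b', hb', hab'⟩ := hsM'
      rw [hBdef] at hb hb'
      simp only [Finset.mem_image, hYdef, Finset.mem_Icc] at hb hb'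
      obtain ⟨y, hy, rfl⟩ := hb
      obtain ⟨y', hy', rfl⟩ := hb'
      have ba := A8_elem_bd a ha
      have ba' := A8_elem_bd a' ha'
      have hcval : x % 30 = a + a' := by
        have hx : x = (a + a') + 30 * (y + y') := by omega
        omega
      refine ⟨a, ⟨ha, a', ha', by omega⟩, 30 * y, ?_, hab⟩
      rw [hBdef, Finset.mem_image]
      refine ⟨y, ?_, rfl⟩
      rw [hYdef, Finset.mem_Icc]
      omega
    have hcard : S.card ≤ 7 * N := by
      calc S.card ≤ ((A8 ∩ A8.image (fun a => x % 30 - a)) + B).card :=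
            Finset.card_le_card key
        _ ≤ (A8 ∩ A8.image (fun a => x % 30 - a)).card * B.card := Finset.card_add_le
        _ ≤ 7 * N := by
            apply Nat.mul_le_mul
            · exact A8_sym_bd (x % 30) (by rw [Finset.mem_Icc]; omega)
            · rw [hBdef]; exact le_of_le_of_eq Finset.card_image_le cY
    have hMcard : (A8 + B).card = 8 * N := by
      rw [hBdef, scaled_card A8 Y 0 A8_bd, cY, A8_card]
    omega
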